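/- arXiv:2111.00061 — 4 statements merged into one kernel-verified Lean document; each statement's English description precedes it below -/
import Mathlib

section
/- Suppose (i) the beliefs {p_s : s ∈ S} of strategic types satisfy convex independence (for every s ∈ S, p_s ∉ co({p_{s'} : s' ∈ S, s' ≠ s})), and (ii) for every behavioral type b ∈ B, p_b ∉ co({p_s : s ∈ S}). Then there exists a contract menu (c_t)_{t∈T}, T = S ∪ B, such that ⟨p_t, c_t⟩ = v_t for all t ∈ T and, for every s ∈ S, c_s minimizes ⟨p_s, c_t⟩ over all t ∈ T. -/
/-- Separation of a point from the convex hull of a finite set, with the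
functional written in coordinates. -/
lemma sep_from_finite_hull {Ω : Type*} [Fintype Ω] (x : Ω → ℝ) (A : Set (Ω → ℝ))
    (hA : A.Finite) (hx : x ∉ convexHull ℝ A) :
    ∃ y : Ω → ℝ, ∀ a ∈ A, (∑ ω, x ω * y ω) < ∑ ω, a ω * y ω := by
  classical
  obtain ⟨f, u, hfu, hf⟩ := geometric_hahn_banach_point_closed
    (convex_convexHull ℝ A) (hA.isClosed_convexHull (𝕜 := ℝ)) hx
  refine ⟨fun ω => f (Pi.single ω (1:ℝ)), ?_⟩
  have key : ∀ q : Ω → ℝ, f q = ∑ ω, q ω * f (Pi.single ω (1:ℝ)) := by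
    intro q
    have hq : q = ∑ ω, q ω • (Pi.single ω (1:ℝ) : Ω → ℝ) := by
      ext j
      simp [Pi.single_apply, Finset.sum_ite_eq', mul_comm]
    conv_lhs => rw [hq]
    rw [map_sum]
    simp [smul_eq_mul]
  intro a ha
  rw [← key, ← key]
  exact (hfu.trans (hf a (subset_convexHull ℝ A ha)))

/-- Main theorem: full extraction with behavioral types is feasible if the
strategic beliefs satisfy the CM (convex independence) condition and each
behavioral belief lies outside the convex hull of the strategic beliefs. -/
theorem full_extraction_with_behavioral_types
    {Ω T : Type*} [Fintype Ω] [Fintype T]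
    (S B : Set T) (hpart : S = Bᶜ)
    (p : T → Ω → ℝ) (v : T → ℝ)
    (hp : ∀ t, p t ∈ stdSimplex ℝ Ω)
    (hpinj : Function.Injective p)
    (hv : ∀ t, 0 ≤ v t)
    (hCM : ∀ s ∈ S, p s ∉ convexHull ℝ (p '' {s' | s' ∈ S ∧ s' ≠ s}))
    (hB : ∀ b ∈ B, p b ∉ convexHull ℝ (p '' S)) :
    ∃ c : T → Ω → ℝ,
      (∀ t, (∑ ω, p t ω * c t ω) = v t) ∧
      (∀ s ∈ S, ∀ t, (∑ ω, p s ω * c s ω) ≤ ∑ ω, p s ω * c t ω) := by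
  classical
  -- probability sums
  have hsum1 : ∀ t, (∑ ω, p t ω) = 1 := fun t => (hp t).2
  -- for each t, p t is outside the hull of the other strategic beliefs
  have hout : ∀ t, p t ∉ convexHull ℝ (p '' {s | s ∈ S ∧ s ≠ t}) := by
    intro t
    by_cases ht : t ∈ S
    · exact hCM t ht
    · have htB : t ∈ B := by
        rw [hpart] at ht; simpa using ht
      have hset : {s | s ∈ S ∧ s ≠ t} = S := by
        ext s; constructor
        · rintro ⟨hs, -⟩; exact hs
        · intro hs; exact ⟨hs, fun h => ht (h ▸ hs)⟩
      rw [hset]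
      exact hB t htB
  -- separating vectors
  have hy : ∀ t : T, ∃ y : Ω → ℝ, ∀ s ∈ S, s ≠ t →
      (∑ ω, p t ω * y ω) < ∑ ω, p s ω * y ω := by
    intro t
    obtain ⟨y, hy⟩ := sep_from_finite_hull (p t) (p '' {s | s ∈ S ∧ s ≠ t})
      ((Set.toFinite _).image p) (hout t)
    exact ⟨y, fun s hs hst => hy (p s) ⟨s, ⟨hs, hst⟩, rfl⟩⟩
  choose y hy using hy
  -- gaps
  set gap : T → T → ℝ := fun s t => (∑ ω, p s ω * y t ω) - (∑ ω, p t ω * y t ω) with hgap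
  have hgap_pos : ∀ t, ∀ s ∈ S, s ≠ t → 0 < gap s t := by
    intro t s hs hst
    exact sub_pos.mpr (hy t s hs hst)
  -- scaling factors
  set lam : T → ℝ := fun t =>
    ∑ s ∈ Finset.univ.filter (fun s => s ∈ S ∧ s ≠ t), v s / gap s t with hlam
  have hlam_nonneg : ∀ t, 0 ≤ lam t := by
    intro t
    apply Finset.sum_nonneg
    intro s hs
    simp only [Finset.mem_filter] at hs
    exact div_nonneg (hv s) (hgap_pos t s hs.2.1 hs.2.2).le
  have hlam_ge : ∀ t, ∀ s ∈ S, s ≠ t → v s ≤ lam t * gap s t := by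
    intro t s hs hst
    have h1 : v s / gap s t ≤ lam t := by
      apply Finset.single_le_sum (f := fun s => v s / gap s t)
        (fun i hi => ?_) (by simp [hs, hst])
      simp only [Finset.mem_filter] at hi
      exact div_nonneg (hv i) (hgap_pos t i hi.2.1 hi.2.2).le
    calc v s = (v s / gap s t) * gap s t :=
            (div_mul_cancel₀ _ (hgap_pos t s hs hst).ne').symm
      _ ≤ lam t * gap s t :=
            mul_le_mul_of_nonneg_right h1 (hgap_pos t s hs hst).le
  -- an algebraic expansion helper
  have expand : ∀ (q : Ω → ℝ) (a b K : ℝ) (z : Ω → ℝ),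
      (∑ ω, q ω * (a + b * (z ω - K)))
        = a * (∑ ω, q ω) + b * ((∑ ω, q ω * z ω) - K * (∑ ω, q ω)) := by
    intro q a b K z
    calc (∑ ω, q ω * (a + b * (z ω - K)))
        = ∑ ω, (a * q ω + b * (q ω * z ω) - b * (K * q ω)) :=
          Finset.sum_congr rfl (fun ω _ => by ring)
      _ = a * (∑ ω, q ω) + b * ((∑ ω, q ω * z ω) - K * (∑ ω, q ω)) := by
          rw [Finset.sum_sub_distrib, Finset.sum_add_distrib, ← Finset.mul_sum,
            ← Finset.mul_sum, ← Finset.mul_sum, ← Finset.mul_sum]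
          ring
  -- the contract menu
  refine ⟨fun t ω => v t + lam t * (y t ω - ∑ ω', p t ω' * y t ω'), ?_, ?_⟩
  · intro t
    rw [expand (p t) (v t) (lam t) (∑ ω', p t ω' * y t ω') (y t), hsum1 t]
    ring
  · intro s hs t
    -- expected payment of contract t under belief s
    have hval : ∀ t' : T, (∑ ω, p s ω * (v t' + lam t' * (y t' ω - ∑ ω', p t' ω' * y t' ω')))
        = v t' + lam t' * ((∑ ω, p s ω * y t' ω) - ∑ ω', p t' ω' * y t' ω') := by
      intro t'
      rw [expand (p s) (v t') (lam t') (∑ ω', p t' ω' * y t' ω') (y t'), hsum1 s]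
      ring
    rw [hval s, hval t]
    simp only [sub_self, mul_zero, add_zero]
    by_cases hts : s = t
    · subst hts; simp
    · have hge := hlam_ge t s hs hts
      have : lam t * ((∑ ω, p s ω * y t ω) - ∑ ω', p t ω' * y t ω') = lam t * gap s t := by
        rw [hgap]
      rw [this]
      have hvt := hv t
      linarith
end

section
/- (Finite Cremér–McLean) Let S be a finite set of types with distinct beliefs p_s ∈ Δ(Ω) on a finite state space Ω satisfying convex independence: for every s ∈ S, p_s ∉ co({p_{s'} : s' ≠ s}). Then for any valuations (v_s)_{s∈S} in ℝ_{≥0}, there exists a contract menu (c_s)_{s∈S}, c_s : Ω → ℝ, such that ⟨p_s, c_s⟩ = v_s for all s ∈ S and ⟨p_s, c_{s'}⟩ ≥ v_s for all s, s' ∈ S. -/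
/-- Finite Crémer–McLean theorem: convex independence of the beliefs implies
full surplus extraction with incentive compatibility. -/
theorem cremer_mclean_finite
    {Ω S : Type*} [Fintype Ω] [Fintype S]
    (p : S → Ω → ℝ) (v : S → ℝ)
    (hp : ∀ s, p s ∈ stdSimplex ℝ Ω)
    (hpinj : Function.Injective p)
    (hv : ∀ s, 0 ≤ v s)
    (hCM : ∀ s, p s ∉ convexHull ℝ (p '' {s' | s' ≠ s})) :
    ∃ c : S → Ω → ℝ,
      (∀ s, (∑ ω, p s ω * c s ω) = v s) ∧
      (∀ s s', v s ≤ ∑ ω, p s ω * c s' ω) := by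
  classical
  -- Step 1: separating vectors from convex independence
  have hsep : ∀ s : S, ∃ x : Ω → ℝ,
      ∀ s', s' ≠ s → (∑ ω, p s ω * x ω) < ∑ ω, p s' ω * x ω := by
    intro s
    have hconv : Convex ℝ (convexHull ℝ (p '' {s' | s' ≠ s})) := convex_convexHull _ _
    have hfin : (p '' {s' | s' ≠ s}).Finite := Set.toFinite _
    have hcl : IsClosed (convexHull ℝ (p '' {s' | s' ≠ s})) :=
      (hfin.isCompact_convexHull (𝕜 := ℝ)).isClosed
    obtain ⟨f, u, hfu, hub⟩ := geometric_hahn_banach_point_closed hconv hcl (hCM s)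
    have key : ∀ q : Ω → ℝ, f q = ∑ ω, q ω * f (Pi.single ω 1) := by
      intro q
      conv_lhs => rw [← Finset.univ_sum_single q]
      rw [map_sum]
      refine Finset.sum_congr rfl fun ω _ => ?_
      have h1 : Pi.single ω (q ω) = q ω • (Pi.single ω 1 : Ω → ℝ) := by
        funext i
        by_cases hi : i = ω
        · subst hi; simp
        · simp [Pi.single_eq_of_ne hi]
      rw [h1, map_smul, smul_eq_mul]
    refine ⟨fun ω => f (Pi.single ω 1), fun s' hs' => ?_⟩
    have h2 : u < f (p s') := hub _ (subset_convexHull _ _ ⟨s', hs', rfl⟩)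
    have h3 : f (p s) < f (p s') := lt_trans hfu h2
    rw [key (p s), key (p s')] at h3
    exact h3
  choose x hx using hsep
  set g : S → S → ℝ := fun s s' => ∑ ω, p s ω * x s' ω with hg
  have hd : ∀ s s', s ≠ s' → 0 < g s s' - g s' s' :=
    fun s s' h => sub_pos.2 (hx s' s h)
  set q : S → S → ℝ := fun s s' =>
    if s ≠ s' then max 0 ((v s - v s') / (g s s' - g s' s')) else 0 with hqdef
  have hq0 : ∀ s s', 0 ≤ q s s' := by
    intro s s'
    simp only [hqdef]
    split_ifs
    · exact le_max_left _ _
    · exact le_refl _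
  set lam : ℝ := ∑ a : S × S, q a.1 a.2 with hlamdef
  have hlam : ∀ s s', q s s' ≤ lam := by
    intro s s'
    exact Finset.single_le_sum (f := fun a : S × S => q a.1 a.2)
      (fun a _ => hq0 a.1 a.2) (Finset.mem_univ (s, s'))
  have hsum1 : ∀ s, ∑ ω, p s ω = 1 := fun s => (hp s).2
  have expand : ∀ s s',
      (∑ ω, p s ω * (v s' + lam * (x s' ω - g s' s'))) =
        v s' + lam * (g s s' - g s' s') := by
    intro s s'
    have h1 : ∀ ω, p s ω * (v s' + lam * (x s' ω - g s' s')) =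
        (v s' - lam * g s' s') * p s ω + lam * (p s ω * x s' ω) := by
      intro ω; ring
    calc (∑ ω, p s ω * (v s' + lam * (x s' ω - g s' s')))
        = ∑ ω, ((v s' - lam * g s' s') * p s ω + lam * (p s ω * x s' ω)) :=
          Finset.sum_congr rfl fun ω _ => h1 ω
      _ = (v s' - lam * g s' s') * (∑ ω, p s ω) + lam * ∑ ω, p s ω * x s' ω := by
          rw [Finset.sum_add_distrib, ← Finset.mul_sum, ← Finset.mul_sum]
      _ = v s' + lam * (g s s' - g s' s') := by
          rw [hsum1 s]; simp only [hg]; ring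
  refine ⟨fun s' ω => v s' + lam * (x s' ω - g s' s'), fun s => ?_, fun s s' => ?_⟩
  · rw [expand s s]; ring
  · rw [expand s s']
    by_cases h : s = s'
    · subst h; simp
    · have hd' := hd s s' h
      have hqeq : q s s' = max 0 ((v s - v s') / (g s s' - g s' s')) := by
        simp [hqdef, h]
      have hq' : (v s - v s') / (g s s' - g s' s') ≤ lam := by
        have := hlam s s'
        rw [hqeq] at this
        exact le_trans (le_max_right _ _) this
      have : v s - v s' ≤ lam * (g s s' - g s' s') := by
        rw [div_le_iff₀ hd'] at hq'
        linarith
      linarith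
end

section
/- Let (c_t)_{t≠b} be a contract menu over types T \ {b} that is incentive compatible for all strategic types s ∈ S (with b ∈ B behavioral). If p_b ∉ co({p_s : s ∈ S}) and each strategic type s's contract satisfies ⟨p_s, c_s⟩ ≤ v_s, then there exists a contract c_b with ⟨p_b, c_b⟩ = v_b such that the extended menu (c_b, (c_t)_{t≠b}) remains incentive compatible for all strategic types. -/
/-- Corollary 1: full extraction from a behavioral type `b` is possible given
any incentive compatible menu for the other types, provided `p_b` lies outside
the convex hull of the strategic beliefs. -/
theorem extraction_from_behavioral_type
    {Ω T : Type*} [Fintype Ω] [Fintype T]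
    (S B : Set T) (hpart : S = Bᶜ)
    (b : T) (hb : b ∈ B)
    (p : T → Ω → ℝ) (v : T → ℝ)
    (hp : ∀ t, p t ∈ stdSimplex ℝ Ω)
    (hpinj : Function.Injective p)
    (hv : ∀ t, 0 ≤ v t)
    (c : T → Ω → ℝ)
    (hIC : ∀ s ∈ S, ∀ t, t ≠ b → (∑ ω, p s ω * c s ω) ≤ ∑ ω, p s ω * c t ω)
    (hcost : ∀ s ∈ S, (∑ ω, p s ω * c s ω) ≤ v s)
    (hhull : p b ∉ convexHull ℝ (p '' S)) :
    ∃ cb : Ω → ℝ,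
      (∑ ω, p b ω * cb ω) = v b ∧
      (∀ s ∈ S, (∑ ω, p s ω * c s ω) ≤ ∑ ω, p s ω * cb ω) := by
  classical
  have hsum : ∀ t, (∑ ω, p t ω) = 1 := fun t => (hp t).2
  -- separate p b from the convex hull
  obtain ⟨f, u, hfb, hfs⟩ :=
    geometric_hahn_banach_point_closed (convex_convexHull ℝ (p '' S))
      (((Set.toFinite (p '' S)).isCompact_convexHull ℝ).isClosed) hhull
  -- functional representation
  have hrep : ∀ q : Ω → ℝ, f q = ∑ ω, q ω * f (Pi.single ω 1) := by
    intro q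
    conv_lhs => rw [← Finset.univ_sum_single q]
    rw [map_sum]
    refine Finset.sum_congr rfl fun ω _ => ?_
    have : Pi.single ω (q ω) = q ω • (Pi.single ω (1 : ℝ) : Ω → ℝ) := by
      rw [← Pi.single_smul, smul_eq_mul, mul_one]
    rw [this, map_smul, smul_eq_mul]
  set δ : ℝ := u - f (p b) with hδ
  have hδpos : 0 < δ := by simp [hδ]; linarith
  set M : ℝ := max 0 (⨆ t : T, ((∑ ω, p t ω * c t ω) - v b) / δ) with hM
  have hM0 : 0 ≤ M := le_max_left _ _
  have hMt : ∀ t : T, ((∑ ω, p t ω * c t ω) - v b) / δ ≤ M := fun t =>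
    le_trans (le_ciSup (f := fun t : T => ((∑ ω, p t ω * c t ω) - v b) / δ)
      (Set.Finite.bddAbove (Set.finite_range _)) t) (le_max_right _ _)
  refine ⟨fun ω => v b + M * (f (Pi.single ω 1) - f (p b)), ?_, ?_⟩ <;>
    [skip; intro s hs]
  all_goals
    have key : ∀ t : T, (∑ ω, p t ω * (v b + M * (f (Pi.single ω 1) - f (p b))))
        = v b + M * (f (p t) - f (p b)) := by
      intro t
      rw [hrep (p t)]
      have : (∑ ω, p t ω * (v b + M * (f (Pi.single ω 1) - f (p b))))
          = (∑ ω, p t ω) * v b + M * ((∑ ω, p t ω * f (Pi.single ω 1))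
            - (∑ ω, p t ω) * f (p b)) := by
        simp only [mul_sub, Finset.mul_sum, Finset.sum_mul, ← Finset.sum_sub_distrib,
          ← Finset.sum_add_distrib]
        exact Finset.sum_congr rfl fun ω _ => by ring
      rw [this, hsum t]; ring
  · rw [key b]; ring
  · rw [key s]
    have hps : p s ∈ convexHull ℝ (p '' S) :=
      subset_convexHull ℝ _ ⟨s, hs, rfl⟩
    have h1 : δ ≤ f (p s) - f (p b) := by
      have := hfs _ hps; simp [hδ]; linarith
    have h2 : (∑ ω, p s ω * c s ω) - v b ≤ M * δ := by
      have := hMt s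
      calc (∑ ω, p s ω * c s ω) - v b
          = ((∑ ω, p s ω * c s ω) - v b) / δ * δ := by
            field_simp
        _ ≤ M * δ := mul_le_mul_of_nonneg_right this hδpos.le
    have h3 : M * δ ≤ M * (f (p s) - f (p b)) :=
      mul_le_mul_of_nonneg_left h1 hM0
    linarith
end

section
/- In the symmetric auction single-bidder reduction: let Θ be a finite set of valuations, Ω = Θ^{n−1} the states, and for each t ∈ Θ let p_t ∈ Δ(Ω) be the conditional belief, with p_t ≠ p_{t'} for t ≠ t'. Define v_t = t · Σ_{ω : max_j ω_j ≤ t} p_t(ω). If for every t ∈ Θ, p_t ∉ co({p_{t'} : t' ∉ B, t' ≠ t}), where B ⊆ Θ is the set of behavioral valuations, then there exists an incentive compatible contract menu (c_t)_{t∈Θ} achieving full extraction: ⟨p_t, c_t⟩ = v_t for all t ∈ Θ, and ⟨p_s, c_s⟩ ≤ ⟨p_s, c_t⟩ for all s ∉ B and all t ∈ Θ. -/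
/-- Evaluating a continuous linear functional on a finite pi type via sums. -/
lemma clm_eval_sum {ι : Type*} [Fintype ι] [DecidableEq ι]
    (f : (ι → ℝ) →L[ℝ] ℝ) (q : ι → ℝ) :
    f q = ∑ ω, q ω * f (Pi.single ω 1) := by
  conv_lhs => rw [← Finset.univ_sum_single q]
  rw [map_sum]
  refine Finset.sum_congr rfl fun ω _ => ?_
  have : Pi.single ω (q ω) = q ω • (Pi.single ω 1 : ι → ℝ) := by
    ext j; by_cases h : j = ω <;> simp [Pi.single_apply, h]
  rw [this, map_smul, smul_eq_mul]

/-- Auction proposition (single-bidder reduction, symmetric case): under the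
combined convex-hull condition on the conditional beliefs, there is an
incentive compatible, fully extracting contract menu. -/
theorem auction_full_extraction
    {Θ : Type*} [Fintype Θ] (n : ℕ) (hn : 2 ≤ n)
    (θval : Θ → ℝ) (hθ : ∀ t, 0 ≤ θval t) (hθinj : Function.Injective θval)
    (B : Set Θ)
    (p : Θ → (Fin (n - 1) → Θ) → ℝ)
    (hp : ∀ t, p t ∈ stdSimplex ℝ (Fin (n - 1) → Θ))
    (hpinj : Function.Injective p)
    (v : Θ → ℝ)
    (hv : ∀ t, v t = θval t *
      ∑ ω : Fin (n - 1) → Θ, if ∀ j, θval (ω j) ≤ θval t then p t ω else 0)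
    (hcond : ∀ t, p t ∉ convexHull ℝ (p '' {t' | t' ∉ B ∧ t' ≠ t})) :
    ∃ c : Θ → (Fin (n - 1) → Θ) → ℝ,
      (∀ t, (∑ ω, p t ω * c t ω) = v t) ∧
      (∀ s, s ∉ B → ∀ t, (∑ ω, p s ω * c s ω) ≤ ∑ ω, p s ω * c t ω) := by
  classical
  have hsum1 : ∀ s, ∑ ω, p s ω = 1 := fun s => (hp s).2
  -- Step 1: strict separation for each t
  have sep : ∀ t, ∃ (g : (Fin (n - 1) → Θ) → ℝ) (u : ℝ),
      (∑ ω, p t ω * g ω) < u ∧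
      ∀ s, s ∉ B → s ≠ t → u < ∑ ω, p s ω * g ω := by
    intro t
    have hfin : (p '' {t' | t' ∉ B ∧ t' ≠ t}).Finite := Set.toFinite _
    obtain ⟨f, u, hfu, hall⟩ :=
      geometric_hahn_banach_point_closed (convex_convexHull ℝ _)
        (hfin.isClosed_convexHull (𝕜 := ℝ)) (hcond t)
    refine ⟨fun ω => f (Pi.single ω 1), u, ?_, ?_⟩
    · rw [← clm_eval_sum f (p t)]; exact hfu
    · intro s hs hst
      have hmem : p s ∈ convexHull ℝ (p '' {t' | t' ∉ B ∧ t' ≠ t}) :=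
        subset_convexHull ℝ _ ⟨s, ⟨hs, hst⟩, rfl⟩
      have := hall _ hmem
      rwa [clm_eval_sum f (p s)] at this
  choose g u hgu hglt using sep
  -- data for each t
  set A : Θ → ℝ := fun t => ∑ ω, p t ω * g t ω with hA
  have hδ : ∀ t, 0 < u t - A t := fun t => sub_pos.2 (hgu t)
  set M : Θ → ℝ := fun t => Finset.univ.sup' ⟨t, Finset.mem_univ t⟩ v with hM
  set K : Θ → ℝ := fun t => max 0 ((M t - v t) / (u t - A t)) with hK
  have hK0 : ∀ t, 0 ≤ K t := fun t => le_max_left _ _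
  refine ⟨fun t ω => v t + K t * (g t ω - A t), ?_, ?_⟩
  -- expansion lemma
  all_goals
    have expand : ∀ s t, (∑ ω, p s ω * (v t + K t * (g t ω - A t)))
        = v t + K t * ((∑ ω, p s ω * g t ω) - A t) := by
      intro s t
      have : ∀ ω, p s ω * (v t + K t * (g t ω - A t))
          = v t * p s ω + K t * (p s ω * g t ω) - (K t * A t) * p s ω := by
        intro ω; ring
      rw [Finset.sum_congr rfl fun ω _ => this ω]
      rw [Finset.sum_sub_distrib, Finset.sum_add_distrib, ← Finset.mul_sum,
        ← Finset.mul_sum, ← Finset.mul_sum, hsum1]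
      ring
  · intro t
    rw [expand t t]
    simp [A]
  · intro s hs t
    rw [expand s s, expand s t]
    rw [show (∑ ω, p s ω * g s ω) - A s = 0 from sub_self _, mul_zero, add_zero]
    rcases eq_or_ne s t with rfl | hst
    · simp [A]
    -- s ≠ t : use the separation gap
    have hgap : u t < ∑ ω, p s ω * g t ω := hglt t s hs hst
    have hvsM : v s ≤ M t := Finset.le_sup' v (Finset.mem_univ s)
    have h1 : K t * (u t - A t) ≤ K t * ((∑ ω, p s ω * g t ω) - A t) :=
      mul_le_mul_of_nonneg_left (by linarith) (hK0 t)
    have h2 : v s - v t ≤ K t * (u t - A t) := by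
      have : (M t - v t) ≤ max 0 ((M t - v t) / (u t - A t)) * (u t - A t) := by
        rcases le_or_gt (M t - v t) 0 with h | h
        · have : 0 ≤ max 0 ((M t - v t) / (u t - A t)) * (u t - A t) :=
            mul_nonneg (le_max_left _ _) (hδ t).le
          linarith
        · calc M t - v t = (M t - v t) / (u t - A t) * (u t - A t) := by
                rw [div_mul_cancel₀ _ (hδ t).ne']
            _ ≤ max 0 ((M t - v t) / (u t - A t)) * (u t - A t) :=
                mul_le_mul_of_nonneg_right (le_max_right _ _) (hδ t).le
      calc v s - v t ≤ M t - v t := by linarith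
        _ ≤ _ := this
    linarith
end
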